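/- For every integer n ≥ 3, d_3(n) < d_2(n); that is, the minimum defect attainable with exactly three pairwise non-congruent rectangles is strictly smaller than the minimum defect attainable with exactly two. -/
import Mathlib


/-- An axis-aligned rectangle with integer coordinates placed on the grid:
lower-left corner `(x, y)`, width `w`, and height `h`. -/
structure Rect where
  x : ℕ
  y : ℕ
  w : ℕ
  h : ℕ
deriving DecidableEq

/-- The area of a rectangle. -/
def Rect.area (r : Rect) : ℕ := r.w * r.h

/-- Two rectangles are congruent if they have the same dimensions,
possibly after a ninety-degree rotation. -/
def Rect.Congruent (r s : Rect) : Prop :=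
  (r.w = s.w ∧ r.h = s.h) ∨ (r.w = s.h ∧ r.h = s.w)

/-- The rectangle `r` covers the unit grid cell `[i, i+1) × [j, j+1)`. -/
def Rect.Covers (r : Rect) (i j : ℕ) : Prop :=
  r.x ≤ i ∧ i < r.x + r.w ∧ r.y ≤ j ∧ j < r.y + r.h

/-- A Mondrian partition of the `n × n` square: a finite collection of
pairwise non-congruent rectangles with positive integer side lengths that
tile the square (every cell of the square is covered by exactly one
rectangle, and rectangles lie inside the square). -/
structure Mondrian (n : ℕ) where
  rects : Finset Rect
  pos : ∀ r ∈ rects, 0 < r.w ∧ 0 < r.h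
  inside : ∀ r ∈ rects, r.x + r.w ≤ n ∧ r.y + r.h ≤ n
  cover : ∀ i j : ℕ, i < n → j < n → ∃! r : Rect, r ∈ rects ∧ r.Covers i j
  noncong : ∀ r ∈ rects, ∀ s ∈ rects, r ≠ s → ¬ r.Congruent s

/-- The defect of a Mondrian partition: the difference between the largest
and the smallest rectangle areas. -/
def Mondrian.defect {n : ℕ} (P : Mondrian n) : ℕ :=
  P.rects.sup fun r => P.rects.sup fun s => r.area - s.area

/-- A Mondrian partition is perfect if all its rectangles have the same area. -/
def Mondrian.IsPerfect {n : ℕ} (P : Mondrian n) : Prop :=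
  ∀ r ∈ P.rects, ∀ s ∈ P.rects, r.area = s.area

/-- `mondrianDk n k` is the minimum defect over all Mondrian partitions of the
`n × n` square using exactly `k` rectangles. -/
noncomputable def mondrianDk (n k : ℕ) : ℕ :=
  sInf {d | ∃ P : Mondrian n, P.rects.card = k ∧ P.defect = d}

/-- `mondrianD n` is the minimum defect over all Mondrian partitions of the
`n × n` square (into at least two rectangles). -/
noncomputable def mondrianD (n : ℕ) : ℕ :=
  sInf {d | ∃ P : Mondrian n, 2 ≤ P.rects.card ∧ P.defect = d}

lemma mondrian3 (n w u a b B : ℕ) (hw : 0 < w) (hu : 0 < u) (ha : 0 < a)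
    (hb : 0 < b) (hn : w + u = n) (hab : a + b = n) (hne : a ≠ b)
    (h1 : w*n ≤ B + u*a) (h2 : w*n ≤ B + u*b) (h3 : u*a ≤ B + w*n)
    (h4 : u*a ≤ B + u*b) (h5 : u*b ≤ B + w*n) (h6 : u*b ≤ B + u*a) :
    ∃ P : Mondrian n, P.rects.card = 3 ∧ P.defect ≤ B := by
  refine ⟨⟨{⟨0,0,w,n⟩, ⟨w,0,u,a⟩, ⟨w,a,u,b⟩}, ?_, ?_, ?_, ?_⟩, ?_, ?_⟩
  · intro r hr
    simp only [Finset.mem_insert, Finset.mem_singleton] at hr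
    rcases hr with rfl|rfl|rfl <;> refine ⟨?_, ?_⟩ <;> simp only [] <;> omega
  · intro r hr
    simp only [Finset.mem_insert, Finset.mem_singleton] at hr
    rcases hr with rfl|rfl|rfl <;> refine ⟨?_, ?_⟩ <;> simp only [] <;> omega
  · intro i j hi hj
    by_cases hiw : i < w
    · refine ⟨⟨0,0,w,n⟩, ⟨by simp, ?_, ?_, ?_, ?_⟩, ?_⟩
      case _ => simp only []; omega
      case _ => simp only []; omega
      case _ => simp only []; omega
      case _ => simp only []; omega
      rintro s ⟨hs, hc⟩
      simp only [Finset.mem_insert, Finset.mem_singleton] at hs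
      rcases hs with rfl|rfl|rfl <;>
        first
          | rfl
          | (exfalso; simp only [Rect.Covers] at hc; (try simp only [] at hc); omega)
    · by_cases hja : j < a
      · refine ⟨⟨w,0,u,a⟩, ⟨by simp, ?_, ?_, ?_, ?_⟩, ?_⟩
        case _ => simp only []; omega
        case _ => simp only []; omega
        case _ => simp only []; omega
        case _ => simp only []; omega
        rintro s ⟨hs, hc⟩
        simp only [Finset.mem_insert, Finset.mem_singleton] at hs
        rcases hs with rfl|rfl|rfl <;>
          first
            | rfl
            | (exfalso; simp only [Rect.Covers] at hc; (try simp only [] at hc); omega)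
      · refine ⟨⟨w,a,u,b⟩, ⟨by simp, ?_, ?_, ?_, ?_⟩, ?_⟩
        case _ => simp only []; omega
        case _ => simp only []; omega
        case _ => simp only []; omega
        case _ => simp only []; omega
        rintro s ⟨hs, hc⟩
        simp only [Finset.mem_insert, Finset.mem_singleton] at hs
        rcases hs with rfl|rfl|rfl <;>
          first
            | rfl
            | (exfalso; simp only [Rect.Covers] at hc; (try simp only [] at hc); omega)
  · intro r hr s hs hrs hcong
    simp only [Finset.mem_insert, Finset.mem_singleton] at hr hs
    rcases hr with rfl|rfl|rfl <;> rcases hs with rfl|rfl|rfl <;>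
      first
        | exact hrs rfl
        | (simp only [Rect.Congruent] at hcong; try (try simp only [] at hcong); omega)
  · rw [Finset.card_insert_of_notMem, Finset.card_insert_of_notMem,
      Finset.card_singleton]
    · simp only [Finset.mem_singleton, Rect.mk.injEq]; omega
    · simp only [Finset.mem_insert, Finset.mem_singleton, Rect.mk.injEq]; omega
  · rw [Mondrian.defect]
    apply Finset.sup_le
    intro r hr
    apply Finset.sup_le
    intro s hs
    simp only [Finset.mem_insert, Finset.mem_singleton] at hr hs
    rcases hr with rfl|rfl|rfl <;> rcases hs with rfl|rfl|rfl <;>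
      simp only [Rect.area] <;> (try simp only []) <;> rw [tsub_le_iff_right] <;> linarith

set_option linter.unusedTactic false

lemma mondrian2_exists (n : ℕ) (hn : 3 ≤ n) : ∃ P : Mondrian n, P.rects.card = 2 := by
  refine ⟨⟨{⟨0,0,n,1⟩, ⟨0,1,n,n-1⟩}, ?_, ?_, ?_, ?_⟩, ?_⟩
  · intro r hr
    simp only [Finset.mem_insert, Finset.mem_singleton] at hr
    rcases hr with rfl|rfl <;> refine ⟨?_, ?_⟩ <;> simp only [] <;> omega
  · intro r hr
    simp only [Finset.mem_insert, Finset.mem_singleton] at hr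
    rcases hr with rfl|rfl <;> refine ⟨?_, ?_⟩ <;> simp only [] <;> omega
  · intro i j hi hj
    by_cases hj1 : j < 1
    · refine ⟨⟨0,0,n,1⟩, ⟨by simp, ?_, ?_, ?_, ?_⟩, ?_⟩
      case _ => simp only []; omega
      case _ => simp only []; omega
      case _ => simp only []; omega
      case _ => simp only []; omega
      rintro s ⟨hs, hc⟩
      simp only [Finset.mem_insert, Finset.mem_singleton] at hs
      rcases hs with rfl|rfl <;>
        first
          | rfl
          | (exfalso; simp only [Rect.Covers] at hc; (try simp only [] at hc); omega)
    · refine ⟨⟨0,1,n,n-1⟩, ⟨by simp, ?_, ?_, ?_, ?_⟩, ?_⟩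
      case _ => simp only []; omega
      case _ => simp only []; omega
      case _ => simp only []; omega
      case _ => simp only []; omega
      rintro s ⟨hs, hc⟩
      simp only [Finset.mem_insert, Finset.mem_singleton] at hs
      rcases hs with rfl|rfl <;>
        first
          | rfl
          | (exfalso; simp only [Rect.Covers] at hc; (try simp only [] at hc); omega)
  · intro r hr s hs hrs hcong
    simp only [Finset.mem_insert, Finset.mem_singleton] at hr hs
    rcases hr with rfl|rfl <;> rcases hs with rfl|rfl <;>
      first
        | exact hrs rfl
        | (simp only [Rect.Congruent] at hcong; (try simp only [] at hcong); omega)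
  · rw [Finset.card_insert_of_notMem, Finset.card_singleton]
    simp only [Finset.mem_singleton, Rect.mk.injEq]; omega

lemma mondrian2_defect (n : ℕ) (P : Mondrian n) (hc : P.rects.card = 2) (hn : 0 < n) :
    ∃ h, 0 < h ∧ h < n ∧ 2*h ≠ n ∧ (n - 2*h) * n ≤ P.defect ∧ (2*h - n) * n ≤ P.defect := by
  obtain ⟨r, ⟨hr, hrc⟩, -⟩ := P.cover 0 0 hn hn
  obtain ⟨hx1, hx2, hy1, hy2⟩ := hrc
  have hrx : r.x = 0 := by omega
  have hry : r.y = 0 := by omega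
  obtain ⟨hrw, hrh⟩ := P.pos r hr
  obtain ⟨hrwn, hrhn⟩ := P.inside r hr
  have h2 : ∃ s ∈ P.rects, s ≠ r := by
    by_contra hcon
    push_neg at hcon
    have hsub : P.rects ⊆ {r} := fun t ht => Finset.mem_singleton.mpr (hcon t ht)
    have := Finset.card_le_card hsub
    simp [hc] at this
  obtain ⟨s, hs, hsr⟩ := h2
  obtain ⟨hsw, hsh⟩ := P.pos s hs
  obtain ⟨hswn, hshn⟩ := P.inside s hs
  have hall : ∀ t ∈ P.rects, t = r ∨ t = s := by
    intro t ht
    by_contra hcon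
    push_neg at hcon
    have hsub : ({t, r, s} : Finset Rect) ⊆ P.rects := by
      intro u hu
      simp only [Finset.mem_insert, Finset.mem_singleton] at hu
      rcases hu with rfl|rfl|rfl <;> assumption
    have hcard := Finset.card_le_card hsub
    rw [Finset.card_insert_of_notMem (by
        simp only [Finset.mem_insert, Finset.mem_singleton]
        push_neg
        exact hcon),
      Finset.card_insert_of_notMem (Finset.notMem_singleton.mpr (Ne.symm hsr)),
      Finset.card_singleton, hc] at hcard
    omega
  have huniq : ∀ i j, i < n → j < n → ∀ t ∈ P.rects, t.Covers i j →
      ∀ u ∈ P.rects, u.Covers i j → t = u := by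
    intro i j hi hj t ht htc u hu huc
    obtain ⟨v, -, hvu⟩ := P.cover i j hi hj
    rw [hvu t ⟨ht, htc⟩, hvu u ⟨hu, huc⟩]
  have hcov : ∀ i j, i < n → j < n → ¬ r.Covers i j → s.Covers i j := by
    intro i j hi hj hnr
    obtain ⟨v, ⟨hv, hvc⟩, -⟩ := P.cover i j hi hj
    rcases hall v hv with rfl|rfl
    · exact absurd hvc hnr
    · exact hvc
  -- r.w = n or r.h = n
  have hwh : r.w = n ∨ r.h = n := by
    by_contra hcon
    push_neg at hcon
    have hw' : r.w < n := lt_of_le_of_ne (by omega) hcon.1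
    have hh' : r.h < n := lt_of_le_of_ne (by omega) hcon.2
    have hs1 : s.Covers r.w 0 := by
      refine hcov r.w 0 hw' hn ?_
      simp only [Rect.Covers]; omega
    have hs2 : s.Covers 0 r.h := by
      refine hcov 0 r.h hn hh' ?_
      simp only [Rect.Covers]; omega
    obtain ⟨a1, a2, a3, a4⟩ := hs1
    obtain ⟨b1, b2, b3, b4⟩ := hs2
    have : s.Covers 0 0 := ⟨by omega, by omega, by omega, by omega⟩
    exact hsr (huniq 0 0 hn hn s hs this r hr ⟨by omega, by omega, by omega, by omega⟩)
  -- the two symmetric cases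
  rcases hwh with hA | hA
  · -- r.w = n
    have hrhn' : r.h < n := by
      rcases lt_or_eq_of_le hrhn with h | h
      · omega
      · exfalso
        have hsx : s.x < n := by omega
        have hsy : s.y < n := by omega
        have h1 : r.Covers s.x s.y := ⟨by omega, by omega, by omega, by omega⟩
        have h2 : s.Covers s.x s.y := ⟨by omega, by omega, by omega, by omega⟩
        exact hsr (huniq s.x s.y hsx hsy s hs h2 r hr h1)
    have hcell : s.Covers 0 r.h := by
      refine hcov 0 r.h hn hrhn' ?_
      simp only [Rect.Covers]; omega
    obtain ⟨e1, e2, e3, e4⟩ := hcell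
    have hsx : s.x = 0 := by omega
    have hsy : s.y = r.h := by
      rcases lt_or_eq_of_le e3 with h | h
      · exfalso
        have hc1 : r.Covers 0 s.y := ⟨by omega, by omega, by omega, by omega⟩
        have hc2 : s.Covers 0 s.y := ⟨by omega, by omega, by omega, by omega⟩
        exact hsr (huniq 0 s.y hn (by omega) s hs hc2 r hr hc1)
      · omega
    have hsw : s.w = n := by
      have hcell2 : s.Covers (n-1) r.h := by
        refine hcov (n-1) r.h (by omega) hrhn' ?_
        simp only [Rect.Covers]; omega
      obtain ⟨f1, f2, f3, f4⟩ := hcell2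
      omega
    have hsh' : s.y + s.h = n := by
      by_contra hcon
      have hlt : s.y + s.h < n := by omega
      have hcell3 : s.Covers 0 (s.y + s.h) := by
        refine hcov 0 (s.y + s.h) hn hlt ?_
        simp only [Rect.Covers]; omega
      obtain ⟨g1, g2, g3, g4⟩ := hcell3
      omega
    have h2h : 2 * r.h ≠ n := by
      intro hh
      refine P.noncong r hr s hs (Ne.symm hsr) ?_
      left
      constructor <;> omega
    have hd : ∀ t ∈ P.rects, ∀ u ∈ P.rects, t.area - u.area ≤ P.defect := by
      intro t ht u hu
      rw [Mondrian.defect]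
      exact le_trans (Finset.le_sup (f := fun u => t.area - u.area) hu)
        (Finset.le_sup (f := fun t => P.rects.sup fun u => t.area - u.area) ht)
    have hra : r.area = r.h * n := by rw [Rect.area, hA, Nat.mul_comm]
    have hsa : s.area = (n - r.h) * n := by
      rw [Rect.area, hsw, Nat.mul_comm]
      congr 1
      omega
    refine ⟨r.h, hrh, hrhn', h2h, ?_, ?_⟩
    · have := hd s hs r hr
      have e : s.area - r.area = (n - 2*r.h) * n := by
        rw [hra, hsa, ← Nat.sub_mul]
        congr 1
        omega
      rw [← e]
      exact this
    · have := hd r hr s hs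
      have e : r.area - s.area = (2*r.h - n) * n := by
        rw [hra, hsa, ← Nat.sub_mul]
        congr 1
        omega
      rw [← e]
      exact this
  · -- r.h = n, symmetric
    have hrwn' : r.w < n := by
      rcases lt_or_eq_of_le hrwn with h | h
      · omega
      · exfalso
        have hsx : s.x < n := by omega
        have hsy : s.y < n := by omega
        have h1 : r.Covers s.x s.y := ⟨by omega, by omega, by omega, by omega⟩
        have h2 : s.Covers s.x s.y := ⟨by omega, by omega, by omega, by omega⟩
        exact hsr (huniq s.x s.y hsx hsy s hs h2 r hr h1)
    have hcell : s.Covers r.w 0 := by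
      refine hcov r.w 0 hrwn' hn ?_
      simp only [Rect.Covers]; omega
    obtain ⟨e1, e2, e3, e4⟩ := hcell
    have hsy : s.y = 0 := by omega
    have hsx : s.x = r.w := by
      rcases lt_or_eq_of_le e1 with h | h
      · exfalso
        have hc1 : r.Covers s.x 0 := ⟨by omega, by omega, by omega, by omega⟩
        have hc2 : s.Covers s.x 0 := ⟨by omega, by omega, by omega, by omega⟩
        exact hsr (huniq s.x 0 (by omega) hn s hs hc2 r hr hc1)
      · omega
    have hsh'' : s.h = n := by
      have hcell2 : s.Covers r.w (n-1) := by
        refine hcov r.w (n-1) hrwn' (by omega) ?_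
        simp only [Rect.Covers]; omega
      obtain ⟨f1, f2, f3, f4⟩ := hcell2
      omega
    have hsw' : s.x + s.w = n := by
      by_contra hcon
      have hlt : s.x + s.w < n := by omega
      have hcell3 : s.Covers (s.x + s.w) 0 := by
        refine hcov (s.x + s.w) 0 hlt hn ?_
        simp only [Rect.Covers]; omega
      obtain ⟨g1, g2, g3, g4⟩ := hcell3
      omega
    have h2h : 2 * r.w ≠ n := by
      intro hh
      refine P.noncong r hr s hs (Ne.symm hsr) ?_
      left
      constructor <;> omega
    have hd : ∀ t ∈ P.rects, ∀ u ∈ P.rects, t.area - u.area ≤ P.defect := by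
      intro t ht u hu
      rw [Mondrian.defect]
      exact le_trans (Finset.le_sup (f := fun u => t.area - u.area) hu)
        (Finset.le_sup (f := fun t => P.rects.sup fun u => t.area - u.area) ht)
    have hra : r.area = r.w * n := by rw [Rect.area, hA]
    have hsa : s.area = (n - r.w) * n := by
      rw [Rect.area, hsh'']
      congr 1
      omega
    refine ⟨r.w, hrw, hrwn', h2h, ?_, ?_⟩
    · have := hd s hs r hr
      have e : s.area - r.area = (n - 2*r.w) * n := by
        rw [hra, hsa, ← Nat.sub_mul]
        congr 1
        omega
      rw [← e]
      exact this
    · have := hd r hr s hs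
      have e : r.area - s.area = (2*r.w - n) * n := by
        rw [hra, hsa, ← Nat.sub_mul]
        congr 1
        omega
      rw [← e]
      exact this

set_option maxHeartbeats 1000000 in
/-- For every `n ≥ 3`, `d_3(n) < d_2(n)`. -/
theorem d3_lt_d2 (n : ℕ) (hn : 3 ≤ n) : mondrianDk n 3 < mondrianDk n 2 := by
  simp only [mondrianDk]
  -- analyze a minimal 2-partition
  obtain ⟨P2, hP2⟩ := mondrian2_exists n hn
  have hne2 : {d | ∃ P : Mondrian n, P.rects.card = 2 ∧ P.defect = d}.Nonempty :=
    ⟨P2.defect, P2, hP2, rfl⟩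
  have hmem := Nat.sInf_mem hne2
  obtain ⟨P, hPc, hPd⟩ := hmem
  obtain ⟨h, hh0, hhn, hh2, hb1, hb2⟩ := mondrian2_defect n P hPc (by omega)
  rw [hPd] at hb1 hb2
  have key : ∀ B : ℕ, ((n % 2 = 1 ∧ B < n) ∨ (n % 2 = 0 ∧ B < 2*n)) →
      B < sInf {d | ∃ P : Mondrian n, P.rects.card = 2 ∧ P.defect = d} := by
    rintro B hB
    rcases lt_or_gt_of_ne hh2 with hlt | hgt
    · refine lt_of_lt_of_le ?_ hb1
      rcases hB with ⟨hp, hBn⟩ | ⟨hp, hBn⟩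
      · calc B < n := hBn
          _ = 1 * n := (one_mul n).symm
          _ ≤ (n - 2*h) * n := Nat.mul_le_mul (by omega) le_rfl
      · calc B < 2 * n := hBn
          _ ≤ (n - 2*h) * n := Nat.mul_le_mul (by omega) le_rfl
    · refine lt_of_lt_of_le ?_ hb2
      rcases hB with ⟨hp, hBn⟩ | ⟨hp, hBn⟩
      · calc B < n := hBn
          _ = 1 * n := (one_mul n).symm
          _ ≤ (2*h - n) * n := Nat.mul_le_mul (by omega) le_rfl
      · calc B < 2 * n := hBn
          _ ≤ (2*h - n) * n := Nat.mul_le_mul (by omega) le_rfl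
  have hub : ∀ B : ℕ, (∃ P : Mondrian n, P.rects.card = 3 ∧ P.defect ≤ B) →
      sInf {d | ∃ P : Mondrian n, P.rects.card = 3 ∧ P.defect = d} ≤ B := by
    rintro B ⟨Q, hQc, hQd⟩
    exact le_trans (Nat.sInf_le ⟨Q, hQc, rfl⟩) hQd
  obtain ⟨k, r, hr6, rfl⟩ : ∃ k r, r < 6 ∧ n = 6*k + r :=
    ⟨n / 6, n % 6, Nat.mod_lt _ (by norm_num), by omega⟩
  interval_cases r
  · -- n = 6k, k ≥ 1
    obtain ⟨k', rfl⟩ : ∃ k', k = k' + 1 := ⟨k - 1, by omega⟩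
    refine lt_of_le_of_lt (hub (12*k'+11) ?_) (key _ (by omega))
    exact mondrian3 _ (2*k'+2) (4*k'+4) (3*k'+2) (3*k'+4) (12*k'+11)
      (by omega) (by omega) (by omega) (by omega) (by omega) (by omega) (by omega)
      (by nlinarith) (by nlinarith) (by nlinarith) (by nlinarith) (by nlinarith) (by nlinarith)
  · -- n = 6k+1, k ≥ 1
    obtain ⟨k', rfl⟩ : ∃ k', k = k' + 1 := ⟨k - 1, by omega⟩
    refine lt_of_le_of_lt (hub (6*k'+6) ?_) (key _ (by omega))
    exact mondrian3 _ (2*k'+2) (4*k'+5) (3*k'+3) (3*k'+4) (6*k'+6)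
      (by omega) (by omega) (by omega) (by omega) (by omega) (by omega) (by omega)
      (by nlinarith) (by nlinarith) (by nlinarith) (by nlinarith) (by nlinarith) (by nlinarith)
  · -- n = 6k+2, k ≥ 1
    obtain ⟨k', rfl⟩ : ∃ k', k = k' + 1 := ⟨k - 1, by omega⟩
    refine lt_of_le_of_lt (hub (12*k'+15) ?_) (key _ (by omega))
    exact mondrian3 _ (2*k'+3) (4*k'+5) (3*k'+3) (3*k'+5) (12*k'+15)
      (by omega) (by omega) (by omega) (by omega) (by omega) (by omega) (by omega)
      (by nlinarith) (by nlinarith) (by nlinarith) (by nlinarith) (by nlinarith) (by nlinarith)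
  · -- n = 6k+3
    refine lt_of_le_of_lt (hub (6*k+2) ?_) (key _ (by omega))
    exact mondrian3 _ (2*k+1) (4*k+2) (3*k+1) (3*k+2) (6*k+2)
      (by omega) (by omega) (by omega) (by omega) (by omega) (by omega) (by omega)
      (by nlinarith) (by nlinarith) (by nlinarith) (by nlinarith) (by nlinarith) (by nlinarith)
  · -- n = 6k+4
    refine lt_of_le_of_lt (hub (12*k+7) ?_) (key _ (by omega))
    exact mondrian3 _ (2*k+1) (4*k+3) (3*k+1) (3*k+3) (12*k+7)
      (by omega) (by omega) (by omega) (by omega) (by omega) (by omega) (by omega)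
      (by nlinarith) (by nlinarith) (by nlinarith) (by nlinarith) (by nlinarith) (by nlinarith)
  · -- n = 6k+5
    refine lt_of_le_of_lt (hub (6*k+4) ?_) (key _ (by omega))
    exact mondrian3 _ (2*k+2) (4*k+3) (3*k+2) (3*k+3) (6*k+4)
      (by omega) (by omega) (by omega) (by omega) (by omega) (by omega) (by omega)
      (by nlinarith) (by nlinarith) (by nlinarith) (by nlinarith) (by nlinarith) (by nlinarith)
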